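/- Consider the graph of the octahedron (triangular antiprism) on vertices 1..6 with edges {12,13,14,15,23,25,26,34,36,45,46,56}, realized at p_1=(0,0,0), p_2=(1,1,1), p_3=(0,1,0), p_4=(1,0,0), p_5=(0,0,1), and p_6=(x,y,z). If this framework admits a self-stress that is nonzero on every edge, then x² - y² - z² - x + y + z = 0. -/
import Mathlib


/-- The edges of the octahedron (triangular antiprism) graph on vertices `0,…,5`
(corresponding to `12,13,14,15,23,25,26,34,36,45,46,56` in 1-based labels). -/
def octEdges : Finset (Fin 6 × Fin 6) :=
  {(0, 1), (0, 2), (0, 3), (0, 4), (1, 2), (1, 4), (1, 5), (2, 3), (2, 5), (3, 4),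
    (3, 5), (4, 5)}

/-- `i` and `j` are adjacent in the octahedron graph. -/
def octAdj (i j : Fin 6) : Prop := (i, j) ∈ octEdges ∨ (j, i) ∈ octEdges

instance : ∀ i j, Decidable (octAdj i j) := fun i j => by unfold octAdj; infer_instance

/-- If the octahedral framework at `p₁=(0,0,0)`, `p₂=(1,1,1)`, `p₃=(0,1,0)`, `p₄=(1,0,0)`,
`p₅=(0,0,1)`, `p₆=(x,y,z)` admits a self-stress nonzero on every edge, then
`x² - y² - z² - x + y + z = 0`. -/
theorem octahedron_tensegrity_necessary (x y z : ℝ)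
    (p : Fin 6 → Fin 3 → ℝ)
    (hp : p = ![![0, 0, 0], ![1, 1, 1], ![0, 1, 0], ![1, 0, 0], ![0, 0, 1], ![x, y, z]])
    (w : Fin 6 → Fin 6 → ℝ)
    (hsymm : ∀ i j, w i j = w j i)
    (hsupp : ∀ i j, ¬ octAdj i j → w i j = 0)
    (hnonzero : ∀ i j, octAdj i j → w i j ≠ 0)
    (heq : ∀ i, ∑ j, w i j • (p i - p j) = 0) :
    x ^ 2 - y ^ 2 - z ^ 2 - x + y + z = 0 := by
  have E : ∀ i c : _, ∑ j : Fin 6, w i j * (p i c - p j c) = 0 := by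
    intro i c
    have h := congrFun (heq i) c
    simpa [Finset.sum_apply] using h
  have w05 : w 0 5 = 0 := hsupp 0 5 (by decide)
  have w13 : w 1 3 = 0 := hsupp 1 3 (by decide)
  have w24 : w 2 4 = 0 := hsupp 2 4 (by decide)
  have s3 : (Fin.succ 2 : Fin 6) = 3 := rfl
  have s4 : ((Fin.succ 2).succ : Fin 6) = 4 := rfl
  have s5 : (((Fin.succ 2).succ).succ : Fin 6) = 5 := rfl
  have E01 := E 0 1
  have E10 := E 1 0
  have E11 := E 1 1
  have E12 := E 1 2
  have E20 := E 2 0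
  have E21 := E 2 1
  have E22 := E 2 2
  simp [hp, Fin.sum_univ_succ, Matrix.cons_val_succ, s3, s4, s5, w05, w13, w24] at E01 E10 E11 E12 E20 E21 E22
  have hsym10 := hsymm 1 0
  have hsym20 := hsymm 2 0
  have hsym21 := hsymm 2 1
  have hg : w 1 5 ≠ 0 := hnonzero 1 5 (by decide)
  have hi : w 2 5 ≠ 0 := hnonzero 2 5 (by decide)
  have ha1 : w 0 1 = w 1 5 * (y + z - x - 1) := by
    linear_combination E12 - E10 + E11 - hsym10
  have ha2 : w 0 1 = w 2 5 * (1 + z - x - y) := by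
    linear_combination -E01 - E21 - E20 + E22 + hsym20
  have h3 : w 1 5 * (x - y) + w 2 5 * z = 0 := by
    linear_combination -E22 - E10 + E11 - hsym21
  have key : (x ^ 2 - y ^ 2 - z ^ 2 - x + y + z) * (w 1 5 * w 2 5) = 0 := by
    linear_combination (z * w 2 5) * ha1 + ((x - y) * w 1 5) * ha2 - w 0 1 * h3
  exact (mul_eq_zero.mp key).resolve_right (mul_ne_zero hg hi)
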